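/- Let f : ℝ → ℝ be continuous and l > 0. If ∫_{t-l}^{t} f(x) dx = ∫_{t}^{t+l} f(x) dx for all t ∈ ℝ and f is bounded (f(t) ∈ [0,1] for all t), then f is l-periodic, i.e., f(t+l) = f(t) for all t. -/

import Mathlib

open MeasureTheory intervalIntegral

theorem sliding_window_adversarial_periodic (f : ℝ → ℝ) (l : ℝ) (hl : 0 < l)
    (hf : Continuous f) (hbd : ∀ t, f t ∈ Set.Icc (0:ℝ) 1)
    (h : ∀ t : ℝ, ∫ x in (t - l)..t, f x = ∫ x in t..(t + l), f x) :
    ∀ t : ℝ, f (t + l) = f t := by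
  set F : ℝ → ℝ := fun t => ∫ x in (0:ℝ)..t, f x with hFdef
  have hF : ∀ t, HasDerivAt F (f t) t := fun t =>
    (hf.integral_hasStrictDerivAt 0 t).hasDerivAt
  have hint : ∀ a b : ℝ, (∫ x in a..b, f x) = F b - F a := by
    intro a b
    have h1 : (∫ x in (0:ℝ)..b, f x) = (∫ x in (0:ℝ)..a, f x) + ∫ x in a..b, f x :=
      (intervalIntegral.integral_add_adjacent_intervals
        (hf.intervalIntegrable _ _) (hf.intervalIntegrable _ _)).symm
    simp only [hFdef]
    rw [h1]
    ring
  -- the combination H t = F (t+l) + F (t-l) - 2 * F t is identically 0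
  have hH0 : ∀ t, F (t + l) + F (t - l) - 2 * F t = 0 := by
    intro t
    have := h t
    rw [hint, hint] at this
    linarith
  -- second difference of f is zero
  have hdd : ∀ t, f (t + l) + f (t - l) - 2 * f t = 0 := by
    intro t
    have h1 : HasDerivAt (fun s => F (s + l)) (f (t + l)) t := by
      have := (hF (t + l)).comp t ((hasDerivAt_id t).add_const l)
      simpa [Function.comp_def] using this
    have h2 : HasDerivAt (fun s => F (s - l)) (f (t - l)) t := by
      have := (hF (t - l)).comp t ((hasDerivAt_id t).sub_const l)
      simpa [Function.comp_def] using this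
    have h3 : HasDerivAt (fun s => F (s + l) + F (s - l) - 2 * F s)
        (f (t + l) + f (t - l) - 2 * f t) t :=
      (h1.add h2).sub ((hF t).const_mul 2)
    have h4 : (fun s => F (s + l) + F (s - l) - 2 * F s) = fun _ => (0:ℝ) :=
      funext hH0
    rw [h4] at h3
    have h5 : HasDerivAt (fun _ : ℝ => (0:ℝ)) 0 t := hasDerivAt_const t 0
    exact (h3.unique h5)
  -- g t := f (t+l) - f t satisfies g (t+l) = g t
  have hg : ∀ t, f (t + l + l) - f (t + l) = f (t + l) - f t := by
    intro t
    have := hdd (t + l)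
    have he : t + l - l = t := by ring
    rw [he] at this
    linarith
  have hstep : ∀ t : ℝ, ∀ n : ℕ, f (t + n * l + l) - f (t + n * l) = f (t + l) - f t := by
    intro t n
    induction n with
    | zero => simp
    | succ n ih =>
      have := hg (t + n * l)
      have he : t + (n + 1 : ℕ) * l = t + n * l + l := by push_cast; ring
      rw [he]
      linarith
  have hiter : ∀ t : ℝ, ∀ n : ℕ, f (t + n * l) = f t + n * (f (t + l) - f t) := by
    intro t n
    induction n with
    | zero => simp
    | succ n ih =>
      have := hstep t n
      have he : t + (n + 1 : ℕ) * l = t + n * l + l := by push_cast; ring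
      rw [he]
      push_cast
      linarith
  intro t
  by_contra hne
  set g := f (t + l) - f t with hgdef
  have hgne : g ≠ 0 := sub_ne_zero.mpr hne
  obtain ⟨n, hn⟩ := exists_nat_gt (1 / |g|)
  have hgpos : 0 < |g| := abs_pos.mpr hgne
  have h1 : (1:ℝ) < n * |g| := by
    rw [div_lt_iff₀ hgpos] at hn
    linarith
  have h2 : |f (t + n * l) - f t| ≤ 1 := by
    have ha := hbd (t + n * l)
    have hb := hbd t
    rw [abs_le]
    constructor <;> [linarith [ha.1, hb.2]; linarith [ha.2, hb.1]]
  rw [hiter t n] at h2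
  have h3 : |(n:ℝ) * g| ≤ 1 := by
    rw [hgdef]
    convert h2 using 2
    ring
  rw [abs_mul, Nat.abs_cast] at h3
  linarith
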